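/- (Theorem 1.2, boundedness) There exists an absolute constant c > 0 such that for every p ∈ [1, ∞] and every f ∈ L_p(ℝ), the function Gf belongs to L_p(ℝ) and ‖Gf‖_{L_p(ℝ)} ≤ c·‖f‖_{L_p(ℝ)}. -/

import Mathlib

open MeasureTheory Filter Real Set
open scoped ENNReal

noncomputable section

/-- Condition (1.5): for every `a > 0`, `∫_{x-a}^{x+a} q(t) dt → ∞` as `|x| → ∞`. -/
def Cond15 (q : ℝ → ℝ) : Prop :=
  ∀ a : ℝ, 0 < a → Tendsto (fun x => ∫ t in (x - a)..(x + a), q t) (cocompact ℝ) atTop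

/-- `(u, v)` is a principal fundamental system of solutions (PFSS) of `z'' = q z`.
Local absolute continuity of `u'` together with `u'' = q u` a.e. is encoded via the
fundamental theorem of calculus: `u' b - u' a = ∫_a^b q t * u t dt` for all `a, b`. -/
def IsPFSS (q u v : ℝ → ℝ) : Prop :=
  ContDiff ℝ 1 u ∧ ContDiff ℝ 1 v ∧
  (∀ a b : ℝ, deriv u b - deriv u a = ∫ t in a..b, q t * u t) ∧
  (∀ a b : ℝ, deriv v b - deriv v a = ∫ t in a..b, q t * v t) ∧
  (∀ x, 0 < u x) ∧ (∀ x, 0 < v x) ∧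
  (∀ x, deriv u x < 0) ∧ (∀ x, 0 < deriv v x) ∧
  (∀ x, deriv v x * u x - deriv u x * v x = 1) ∧
  (∀ x, u x = v x * ∫ t in Set.Ioi x, ((v t) ^ 2)⁻¹) ∧
  Tendsto u atTop (nhds 0) ∧ Tendsto (deriv u) atTop (nhds 0) ∧
  Tendsto v atTop atTop ∧ Tendsto (deriv v) atTop atTop ∧
  Tendsto v atBot (nhds 0) ∧ Tendsto (deriv v) atBot (nhds 0) ∧
  Tendsto u atBot atTop ∧ Tendsto (fun x => |deriv u x|) atBot atTop

/-- The Green function: `G(x,t) = u(x) v(t)` for `x ≥ t`, `G(x,t) = u(t) v(x)` for `x ≤ t`. -/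
def GreenFn (u v : ℝ → ℝ) (x t : ℝ) : ℝ := if x ≤ t then u t * v x else u x * v t

/-- The Green operator `(Gf)(x) = ∫_ℝ G(x,t) f(t) dt`. -/
def GreenOp (u v f : ℝ → ℝ) (x : ℝ) : ℝ := ∫ t, GreenFn u v x t * f t

section Aux

variable {q u v : ℝ → ℝ}

lemma greenFn_eq (u v : ℝ → ℝ) (x t : ℝ) :
    GreenFn u v x t = u (max x t) * v (min x t) := by
  unfold GreenFn
  rcases le_or_gt x t with h | h
  · rw [if_pos h, max_eq_right h, min_eq_left h]
  · rw [if_neg (not_le.mpr h), max_eq_left h.le, min_eq_right h.le]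

lemma greenFn_symm (u v : ℝ → ℝ) (x t : ℝ) :
    GreenFn u v x t = GreenFn u v t x := by
  rw [greenFn_eq, greenFn_eq, max_comm, min_comm]

lemma greenFn_nonneg (hu : ∀ x, 0 < u x) (hv : ∀ x, 0 < v x) (x t : ℝ) :
    0 ≤ GreenFn u v x t := by
  rw [greenFn_eq]
  exact mul_nonneg (hu _).le (hv _).le

lemma greenFn_continuous (hu : Continuous u) (hv : Continuous v) :
    Continuous (fun p : ℝ × ℝ => GreenFn u v p.1 p.2) := by
  have : (fun p : ℝ × ℝ => GreenFn u v p.1 p.2)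
      = fun p : ℝ × ℝ => u (max p.1 p.2) * v (min p.1 p.2) := by
    funext p; exact greenFn_eq u v p.1 p.2
  rw [this]
  exact (hu.comp (continuous_fst.max continuous_snd)).mul
    (hv.comp (continuous_fst.min continuous_snd))

/-- `∫_x^∞ u ≤ -u'(x)`. -/
lemma int_u_bound (hq_loc : LocallyIntegrable q) (hq : ∀ x, 1 ≤ q x)
    (huc : Continuous u) (hupos : ∀ x, 0 < u x) (hu' : ∀ x, deriv u x < 0)
    (hFTC : ∀ a b : ℝ, deriv u b - deriv u a = ∫ t in a..b, q t * u t) (x : ℝ) :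
    IntegrableOn u (Ioi x) ∧ ∫ t in Ioi x, u t ≤ -deriv u x := by
  have key : ∀ b : ℝ, x ≤ b → ∫ t in x..b, u t ≤ -deriv u x := by
    intro b hb
    have hqu : IntegrableOn (fun t => q t * u t) (Icc x b) :=
      (hq_loc.integrableOn_isCompact isCompact_Icc).mul_continuousOn
        huc.continuousOn isCompact_Icc
    have hqu' : IntervalIntegrable (fun t => q t * u t) volume x b := by
      rw [intervalIntegrable_iff_integrableOn_Icc_of_le hb]; exact hqu
    have h1 : ∫ t in x..b, u t ≤ ∫ t in x..b, q t * u t := by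
      apply intervalIntegral.integral_mono_on hb (huc.intervalIntegrable x b) hqu'
      intro t _
      nlinarith [hq t, (hupos t).le]
    have h2 : ∫ t in x..b, q t * u t = deriv u b - deriv u x := (hFTC x b).symm
    have := hu' b
    linarith
  have hIoc : ∀ b : ℝ, IntegrableOn u (Ioc x b) := fun b =>
    huc.integrableOn_Ioc
  have hnorm : ∀ b : ℝ, x ≤ b → (∫ t in x..b, ‖u t‖) = ∫ t in x..b, u t := by
    intro b _
    apply intervalIntegral.integral_congr
    intro t _
    exact Real.norm_of_nonneg (hupos t).le
  have hint : IntegrableOn u (Ioi x) := by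
    apply integrableOn_Ioi_of_intervalIntegral_norm_bounded (-deriv u x) x hIoc
      (tendsto_id (α := ℝ))
    filter_upwards [eventually_ge_atTop x] with b hb
    rw [hnorm b hb]; exact key b hb
  refine ⟨hint, ?_⟩
  apply le_of_tendsto (intervalIntegral_tendsto_integral_Ioi x hint
    (tendsto_id (α := ℝ)))
  filter_upwards [eventually_ge_atTop x] with b hb using key b hb

/-- `∫_{-∞}^x v ≤ v'(x)`. -/
lemma int_v_bound (hq_loc : LocallyIntegrable q) (hq : ∀ x, 1 ≤ q x)
    (hvc : Continuous v) (hvpos : ∀ x, 0 < v x) (hv' : ∀ x, 0 < deriv v x)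
    (hFTC : ∀ a b : ℝ, deriv v b - deriv v a = ∫ t in a..b, q t * v t) (x : ℝ) :
    IntegrableOn v (Iic x) ∧ ∫ t in Iic x, v t ≤ deriv v x := by
  have key : ∀ a : ℝ, a ≤ x → ∫ t in a..x, v t ≤ deriv v x := by
    intro a ha
    have hqv : IntegrableOn (fun t => q t * v t) (Icc a x) :=
      (hq_loc.integrableOn_isCompact isCompact_Icc).mul_continuousOn
        hvc.continuousOn isCompact_Icc
    have hqv' : IntervalIntegrable (fun t => q t * v t) volume a x := by
      rw [intervalIntegrable_iff_integrableOn_Icc_of_le ha]; exact hqv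
    have h1 : ∫ t in a..x, v t ≤ ∫ t in a..x, q t * v t := by
      apply intervalIntegral.integral_mono_on ha (hvc.intervalIntegrable a x) hqv'
      intro t _
      nlinarith [hq t, (hvpos t).le]
    have h2 : ∫ t in a..x, q t * v t = deriv v x - deriv v a := (hFTC a x).symm
    have := hv' a
    linarith
  have hIoc : ∀ a : ℝ, IntegrableOn v (Ioc a x) := fun a =>
    hvc.integrableOn_Ioc
  have hnorm : ∀ a : ℝ, a ≤ x → (∫ t in a..x, ‖v t‖) = ∫ t in a..x, v t := by
    intro a _
    apply intervalIntegral.integral_congr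
    intro t _
    exact Real.norm_of_nonneg (hvpos t).le
  have hint : IntegrableOn v (Iic x) := by
    apply integrableOn_Iic_of_intervalIntegral_norm_bounded (deriv v x) x hIoc
      (tendsto_id (α := ℝ))
    filter_upwards [eventually_le_atBot x] with a ha
    rw [hnorm a ha]; exact key a ha
  refine ⟨hint, ?_⟩
  apply le_of_tendsto (intervalIntegral_tendsto_integral_Iic x hint
    (tendsto_id (α := ℝ)))
  filter_upwards [eventually_le_atBot x] with a ha using key a ha

/-- The row integral of the Green kernel is at most `1`. -/
lemma greenFn_row_bound (hq_loc : LocallyIntegrable q) (hq : ∀ x, 1 ≤ q x)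
    (huv : IsPFSS q u v) (x : ℝ) :
    ∫⁻ t, ENNReal.ofReal (GreenFn u v x t) ≤ 1 := by
  obtain ⟨hu1, hv1, hFTCu, hFTCv, hupos, hvpos, hu', hv', hW, -⟩ := huv
  have huc : Continuous u := hu1.continuous
  have hvc : Continuous v := hv1.continuous
  obtain ⟨hui, hub⟩ := int_u_bound hq_loc hq huc hupos hu' hFTCu x
  obtain ⟨hvi, hvb⟩ := int_v_bound hq_loc hq hvc hvpos hv' hFTCv x
  have hsplit : ∫⁻ t, ENNReal.ofReal (GreenFn u v x t)
      = (∫⁻ t in Iio x, ENNReal.ofReal (GreenFn u v x t))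
        + ∫⁻ t in Ici x, ENNReal.ofReal (GreenFn u v x t) := by
    rw [← lintegral_add_compl (fun t => ENNReal.ofReal (GreenFn u v x t))
      measurableSet_Iio, compl_Iio]
  -- the part on `Ici x`
  have hIci : (∫⁻ t in Ici x, ENNReal.ofReal (GreenFn u v x t))
      = ENNReal.ofReal (v x) * ∫⁻ t in Ici x, ENNReal.ofReal (u t) := by
    rw [← lintegral_const_mul' _ _ ENNReal.ofReal_ne_top]
    apply setLIntegral_congr_fun measurableSet_Ici
    intro t ht
    dsimp only
    rw [GreenFn, if_pos (mem_Ici.mp ht), mul_comm (u t) (v x), ENNReal.ofReal_mul (hvpos x).le]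
  have hIci2 : (∫⁻ t in Ici x, ENNReal.ofReal (u t))
      = ENNReal.ofReal (∫ t in Ioi x, u t) := by
    rw [← setLIntegral_congr (Ioi_ae_eq_Ici (a := x))]
    exact (ofReal_integral_eq_lintegral_ofReal hui
      (Filter.Eventually.of_forall fun t => (hupos t).le)).symm
  -- the part on `Iio x`
  have hIio : (∫⁻ t in Iio x, ENNReal.ofReal (GreenFn u v x t))
      = ENNReal.ofReal (u x) * ∫⁻ t in Iio x, ENNReal.ofReal (v t) := by
    rw [← lintegral_const_mul' _ _ ENNReal.ofReal_ne_top]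
    apply setLIntegral_congr_fun measurableSet_Iio
    intro t ht
    dsimp only
    rw [GreenFn, if_neg (not_le.mpr (mem_Iio.mp ht)), ENNReal.ofReal_mul (hupos x).le]
  have hIio2 : (∫⁻ t in Iio x, ENNReal.ofReal (v t))
      = ENNReal.ofReal (∫ t in Iic x, v t) := by
    rw [setLIntegral_congr (Iio_ae_eq_Iic (a := x))]
    exact (ofReal_integral_eq_lintegral_ofReal hvi
      (Filter.Eventually.of_forall fun t => (hvpos t).le)).symm
  rw [hsplit, hIci, hIci2, hIio, hIio2]
  calc ENNReal.ofReal (u x) * ENNReal.ofReal (∫ t in Iic x, v t)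
        + ENNReal.ofReal (v x) * ENNReal.ofReal (∫ t in Ioi x, u t)
      ≤ ENNReal.ofReal (u x) * ENNReal.ofReal (deriv v x)
        + ENNReal.ofReal (v x) * ENNReal.ofReal (-deriv u x) :=
        add_le_add
          (mul_le_mul_right (ENNReal.ofReal_le_ofReal hvb) _)
          (mul_le_mul_right (ENNReal.ofReal_le_ofReal hub) _)
    _ = ENNReal.ofReal (u x * deriv v x + v x * -deriv u x) := by
        rw [ENNReal.ofReal_add (by nlinarith [hupos x, hv' x])
          (by nlinarith [hvpos x, hu' x]),
          ENNReal.ofReal_mul (hupos x).le, ENNReal.ofReal_mul (hvpos x).le]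
    _ = 1 := by
        have := hW x
        rw [show u x * deriv v x + v x * -deriv u x
          = deriv v x * u x - deriv u x * v x by ring, this, ENNReal.ofReal_one]

/-- Pointwise Schur-test inequality in `ℝ≥0∞`. -/
lemma schur_pointwise {K g : ℝ → ℝ≥0∞} (hK : AEMeasurable K)
    (hg : AEMeasurable g) (hK1 : ∫⁻ t, K t ≤ 1) {r : ℝ} (hr : 1 ≤ r) :
    (∫⁻ t, K t * g t) ^ r ≤ ∫⁻ t, K t * g t ^ r := by
  rcases eq_or_lt_of_le hr with hr1 | hr1
  · simp [← hr1]
  -- Hölder with exponents (r', r), r' = r/(r-1)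
  have hconj : (Real.conjExponent r).HolderConjugate r :=
    (Real.HolderConjugate.conjExponent hr1).symm
  set r' := Real.conjExponent r with hr'def
  have hr'pos : 0 < r' := hconj.pos
  have hrpos : (0:ℝ) < r := hconj.symm.pos
  have key : (∫⁻ t, K t * g t)
      ≤ (∫⁻ t, K t) ^ (1 / r') * (∫⁻ t, K t * g t ^ r) ^ (1 / r) := by
    have h := ENNReal.lintegral_mul_le_Lp_mul_Lq volume hconj
      (f := fun t => K t ^ (1 / r')) (g := fun t => K t ^ (1 / r) * g t)
      ((hK.pow_const _)) ((hK.pow_const _).mul hg)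
    have e1 : ∀ t, ((fun t => K t ^ (1 / r')) * fun t => K t ^ (1 / r) * g t) t
        = K t * g t := by
      intro t
      have : K t ^ (1 / r') * K t ^ (1 / r) = K t := by
        rw [← ENNReal.rpow_add_of_nonneg _ _ (by positivity) (by positivity),
          one_div, one_div, hconj.inv_add_inv_eq_one, ENNReal.rpow_one]
      simp only [Pi.mul_apply]
      rw [← mul_assoc, this]
    have e2 : ∀ t, (K t ^ (1 / r')) ^ r' = K t := by
      intro t
      rw [← ENNReal.rpow_mul, one_div, inv_mul_cancel₀ hr'pos.ne', ENNReal.rpow_one]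
    have e3 : ∀ t, (K t ^ (1 / r) * g t) ^ r = K t * g t ^ r := by
      intro t
      rw [ENNReal.mul_rpow_of_nonneg _ _ hrpos.le, ← ENNReal.rpow_mul, one_div,
        inv_mul_cancel₀ hrpos.ne', ENNReal.rpow_one]
    calc (∫⁻ t, K t * g t)
        = ∫⁻ t, ((fun t => K t ^ (1 / r')) * fun t => K t ^ (1 / r) * g t) t := by
          apply lintegral_congr; intro t; rw [e1]
      _ ≤ (∫⁻ t, (K t ^ (1 / r')) ^ r') ^ (1 / r')
            * (∫⁻ t, (K t ^ (1 / r) * g t) ^ r) ^ (1 / r) := h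
      _ = (∫⁻ t, K t) ^ (1 / r') * (∫⁻ t, K t * g t ^ r) ^ (1 / r) := by
          congr 1
          · congr 1; apply lintegral_congr; intro t; rw [e2]
          · congr 1; apply lintegral_congr; intro t; rw [e3]
  have hK1' : (∫⁻ t, K t) ^ (1 / r') ≤ 1 :=
    ENNReal.rpow_le_one hK1 (by positivity)
  have key2 : (∫⁻ t, K t * g t) ≤ (∫⁻ t, K t * g t ^ r) ^ (1 / r) := by
    calc (∫⁻ t, K t * g t)
        ≤ (∫⁻ t, K t) ^ (1 / r') * (∫⁻ t, K t * g t ^ r) ^ (1 / r) := key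
      _ ≤ 1 * (∫⁻ t, K t * g t ^ r) ^ (1 / r) := by gcongr
      _ = (∫⁻ t, K t * g t ^ r) ^ (1 / r) := one_mul _
  calc (∫⁻ t, K t * g t) ^ r ≤ ((∫⁻ t, K t * g t ^ r) ^ (1 / r)) ^ r :=
        ENNReal.rpow_le_rpow key2 hrpos.le
    _ = ∫⁻ t, K t * g t ^ r := by
        rw [← ENNReal.rpow_mul, one_div, inv_mul_cancel₀ hrpos.ne', ENNReal.rpow_one]

end Aux

/-- Theorem 1.2 (boundedness): there is an absolute constant `c > 0` such that for every
`p ∈ [1, ∞]` and every `f ∈ L_p(ℝ)`, `Gf ∈ L_p(ℝ)` and `‖Gf‖_p ≤ c ‖f‖_p`. -/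
theorem theorem_1_2_boundedness (q u v : ℝ → ℝ) (hq_loc : LocallyIntegrable q)
    (hq : ∀ x, 1 ≤ q x) (huv : IsPFSS q u v) :
    ∃ c : ℝ, 0 < c ∧ ∀ p : ℝ≥0∞, 1 ≤ p → ∀ f : ℝ → ℝ, MemLp f p →
      MemLp (GreenOp u v f) p ∧
      eLpNorm (GreenOp u v f) p volume ≤ ENNReal.ofReal c * eLpNorm f p volume := by
  obtain ⟨hu1, hv1, hFTCu, hFTCv, hupos, hvpos, hu', hv', hW, hrest⟩ := huv
  have huc : Continuous u := hu1.continuous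
  have hvc : Continuous v := hv1.continuous
  set K : ℝ → ℝ → ℝ≥0∞ := fun x t => ENNReal.ofReal (GreenFn u v x t) with hKdef
  have hKcont : Continuous (fun p : ℝ × ℝ => GreenFn u v p.1 p.2) :=
    greenFn_continuous huc hvc
  have hKmeas : Measurable (fun p : ℝ × ℝ => K p.1 p.2) :=
    hKcont.measurable.ennreal_ofReal
  have hKrow : ∀ x, ∫⁻ t, K x t ≤ 1 := fun x =>
    greenFn_row_bound hq_loc hq
      ⟨hu1, hv1, hFTCu, hFTCv, hupos, hvpos, hu', hv', hW, hrest⟩ x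
  have hKcol : ∀ t, ∫⁻ x, K x t ≤ 1 := by
    intro t
    have : ∀ x, K x t = K t x := by
      intro x; simp only [hKdef]; rw [greenFn_symm]
    simp_rw [this]
    exact hKrow t
  refine ⟨1, one_pos, ?_⟩
  intro p hp1 f hf
  -- reduce to a strongly measurable representative of `f`
  obtain ⟨f', hf'sm, hff'⟩ : ∃ f' : ℝ → ℝ, StronglyMeasurable f' ∧ f =ᵐ[volume] f' :=
    ⟨hf.1.mk f, hf.1.stronglyMeasurable_mk, hf.1.ae_eq_mk⟩
  have hGeq : GreenOp u v f = GreenOp u v f' := by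
    funext x
    apply integral_congr_ae
    filter_upwards [hff'] with t ht
    rw [ht]
  have heq : eLpNorm f p volume = eLpNorm f' p volume := eLpNorm_congr_ae hff'
  have hf' : MemLp f' p := hf.ae_eq hff'
  rw [hGeq, heq]
  -- the enorm of `f'`
  set g : ℝ → ℝ≥0∞ := fun t => (‖f' t‖₊ : ℝ≥0∞) with hgdef
  have hgmeas : Measurable g := hf'sm.measurable.enorm
  -- measurability of the Green operator
  have hGsm : AEStronglyMeasurable (GreenOp u v f') volume := by
    have : AEStronglyMeasurable (fun p : ℝ × ℝ => GreenFn u v p.1 p.2 * f' p.2)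
        (volume.prod volume) :=
      (hKcont.measurable.mul (hf'sm.measurable.comp measurable_snd)).stronglyMeasurable
        |>.aestronglyMeasurable
    exact this.integral_prod_right'
  -- the pointwise domination
  have hpt : ∀ x, (‖GreenOp u v f' x‖₊ : ℝ≥0∞) ≤ ∫⁻ t, K x t * g t := by
    intro x
    calc (‖GreenOp u v f' x‖₊ : ℝ≥0∞)
        ≤ ∫⁻ t, (‖GreenFn u v x t * f' t‖₊ : ℝ≥0∞) :=
          enorm_integral_le_lintegral_enorm _
      _ = ∫⁻ t, K x t * g t := by
          apply lintegral_congr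
          intro t
          rw [nnnorm_mul, ENNReal.coe_mul, hKdef, ← enorm_eq_nnnorm (GreenFn u v x t),
            Real.enorm_eq_ofReal (greenFn_nonneg hupos hvpos x t)]
  -- measurability of `x ↦ ∫⁻ t, K x t * g t`
  have hHmeas : Measurable (fun x => ∫⁻ t, K x t * g t) := by
    apply Measurable.lintegral_prod_right'
      (f := fun p : ℝ × ℝ => K p.1 p.2 * g p.2)
    exact hKmeas.mul (hgmeas.comp measurable_snd)
  by_cases hptop : p = ∞
  -- the case p = ∞
  · subst hptop
    have hbound : ∀ x, (‖GreenOp u v f' x‖₊ : ℝ≥0∞) ≤ eLpNormEssSup f' volume := by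
      intro x
      refine (hpt x).trans ?_
      calc (∫⁻ t, K x t * g t)
          ≤ ∫⁻ t, K x t * eLpNormEssSup f' volume := by
            apply lintegral_mono_ae
            filter_upwards [ae_le_eLpNormEssSup (f := f') (μ := volume)] with t ht
            exact mul_le_mul_right ht _
        _ = (∫⁻ t, K x t) * eLpNormEssSup f' volume := lintegral_mul_const' _ _ (by
            rw [← eLpNorm_exponent_top]; exact hf'.2.ne)
        _ ≤ 1 * eLpNormEssSup f' volume := by
            gcongr; exact hKrow x
        _ = eLpNormEssSup f' volume := one_mul _
    have hsnorm : eLpNorm (GreenOp u v f') ∞ volume ≤ eLpNormEssSup f' volume := by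
      rw [eLpNorm_exponent_top]
      exact essSup_le_of_ae_le _ (Filter.Eventually.of_forall hbound)
    constructor
    · refine ⟨hGsm, ?_⟩
      calc eLpNorm (GreenOp u v f') ∞ volume ≤ eLpNormEssSup f' volume := hsnorm
        _ = eLpNorm f' ∞ volume := eLpNorm_exponent_top.symm
        _ < ∞ := hf'.2
    · rw [ENNReal.ofReal_one, one_mul, eLpNorm_exponent_top]
      exact hsnorm
  -- the case p < ∞
  · have hp0 : p ≠ 0 := by
      intro h; rw [h] at hp1; exact absurd hp1 (by simp)
    set r : ℝ := p.toReal with hrdef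
    have hr1 : 1 ≤ r := by
      have := ENNReal.toReal_mono hptop hp1
      simpa using this
    have hr0 : 0 < r := lt_of_lt_of_le one_pos hr1
    have hsnorm_f : eLpNorm f' p volume = (∫⁻ t, g t ^ r) ^ (1 / r) := by
      exact eLpNorm_eq_lintegral_rpow_enorm_toReal hp0 hptop
    have hsnorm_G : eLpNorm (GreenOp u v f') p volume
        = (∫⁻ x, (‖GreenOp u v f' x‖₊ : ℝ≥0∞) ^ r) ^ (1 / r) := by
      exact eLpNorm_eq_lintegral_rpow_enorm_toReal hp0 hptop
    have hmain : (∫⁻ x, (‖GreenOp u v f' x‖₊ : ℝ≥0∞) ^ r) ≤ ∫⁻ t, g t ^ r := by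
      calc (∫⁻ x, (‖GreenOp u v f' x‖₊ : ℝ≥0∞) ^ r)
          ≤ ∫⁻ x, (∫⁻ t, K x t * g t) ^ r := by
            apply lintegral_mono
            intro x
            exact ENNReal.rpow_le_rpow (hpt x) hr0.le
        _ ≤ ∫⁻ x, ∫⁻ t, K x t * g t ^ r := by
            apply lintegral_mono
            intro x
            exact schur_pointwise (hKmeas.comp measurable_prodMk_left).aemeasurable
              hgmeas.aemeasurable (hKrow x) hr1
        _ = ∫⁻ t, ∫⁻ x, K x t * g t ^ r := by
            apply lintegral_lintegral_swap
            exact (hKmeas.mul ((hgmeas.pow_const r).comp measurable_snd)).aemeasurable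
        _ = ∫⁻ t, (∫⁻ x, K x t) * g t ^ r := by
            apply lintegral_congr
            intro t
            rw [lintegral_mul_const' _ _
              (ENNReal.rpow_ne_top_of_nonneg hr0.le ENNReal.coe_ne_top)]
        _ ≤ ∫⁻ t, 1 * g t ^ r := by
            apply lintegral_mono
            intro t
            exact mul_le_mul_left (hKcol t) _
        _ = ∫⁻ t, g t ^ r := by simp
    have hle : eLpNorm (GreenOp u v f') p volume ≤ eLpNorm f' p volume := by
      rw [hsnorm_f, hsnorm_G]
      exact ENNReal.rpow_le_rpow hmain (by positivity)
    constructor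
    · exact ⟨hGsm, hle.trans_lt hf'.2⟩
    · rw [ENNReal.ofReal_one, one_mul]
      exact hle
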